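/- Let G be a connected simple undirected graph on n ≥ 4 vertices with m edges and degree sequence d₁ ≥ d₂ ≥ … ≥ d_n, let μ₁ ≥ μ₂ ≥ … ≥ μ_n = 0 be the eigenvalues of its Laplacian matrix, and assume μ₁ ≥ 1 + d₁ and μ₂ ≥ d₂ (both of which hold for every connected graph) and (n−2) d₂ ≥ 2m − 1 − d₁. Then the Kirchhoff index satisfies Kf(G) ≥ n ( 1/(1+d₁) + 1/d₂ + (n−3)²/(2m−1−d₁−d₂) ). -/

import Mathlib

open Polynomial Matrix in
lemma my_charpoly_conj {k : Type*} [Fintype k] [DecidableEq k] {R : Type*} [CommRing R]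
    (U V B : Matrix k k R) (hUV : U * V = 1) :
    (U * B * V).charpoly = B.charpoly := by
  have hone : (C : R →+* R[X]).mapMatrix U * (C : R →+* R[X]).mapMatrix V = 1 := by
    rw [← _root_.map_mul, hUV, _root_.map_one]
  have key : charmatrix (U * B * V) =
      (C : R →+* R[X]).mapMatrix U * charmatrix B * (C : R →+* R[X]).mapMatrix V := by
    unfold charmatrix
    rw [mul_sub, sub_mul]
    congr 1
    · rw [mul_assoc, (Matrix.scalar_commute (X : R[X]) (fun r => Commute.all _ _) _).eq,
        ← mul_assoc, hone, one_mul]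
    · rw [← _root_.map_mul, ← _root_.map_mul]
  have hdet : ((C : R →+* R[X]).mapMatrix U).det * ((C : R →+* R[X]).mapMatrix V).det = 1 := by
    rw [← det_mul, hone, det_one]
  rw [Matrix.charpoly, key, det_mul, det_mul, mul_right_comm, hdet, one_mul, Matrix.charpoly]

open Polynomial in
/-- The multiset of the `μ i` equals the multiset of eigenvalues of the Hermitian matrix. -/
lemma my_mu_eq_eigs {n : ℕ} (A : Matrix (Fin n) (Fin n) ℝ) (hA : A.IsHermitian)
    (μ : Fin n → ℝ) (hchar : A.charpoly = ∏ i, (X - C (μ i))) :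
    Multiset.map μ Finset.univ.val = Multiset.map hA.eigenvalues Finset.univ.val := by
  have hcp : A.charpoly = ∏ i, (X - C (hA.eigenvalues i)) := by
    conv_lhs => rw [hA.spectral_theorem]
    rw [Unitary.conjStarAlgAut_apply]
    rw [my_charpoly_conj _ _ _ (Matrix.mem_unitaryGroup_iff.mp hA.eigenvectorUnitary.2)]
    rw [Matrix.charpoly_of_upperTriangular _ (Matrix.blockTriangular_diagonal _)]
    refine Finset.prod_congr rfl fun i _ => ?_
    simp [Matrix.diagonal_apply_eq]
  have key : ∀ f : Fin n → ℝ,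
      (∏ i, (X - C (f i))).roots = Multiset.map f Finset.univ.val := by
    intro f
    have : ∏ i, (X - C (f i)) =
        ((Multiset.map f Finset.univ.val).map fun a => X - C a).prod := by
      rw [Multiset.map_map]; rfl
    rw [this, roots_multiset_prod_X_sub_C]
  have := congrArg Polynomial.roots (hchar.symm.trans hcp)
  rwa [key, key] at this

lemma my_nullity_one {n : ℕ} (hn : 1 ≤ n) (G : SimpleGraph (Fin n)) [DecidableRel G.Adj]
    (hconn : G.Connected) :
    Fintype.card {i // (SimpleGraph.posSemidef_lapMatrix ℝ G).1.eigenvalues i = 0} = 1 := by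
  classical
  set L := SimpleGraph.lapMatrix ℝ G with hLdef
  have hrank : L.rank = Fintype.card
      {i // (SimpleGraph.posSemidef_lapMatrix ℝ G).1.eigenvalues i ≠ 0} :=
    (SimpleGraph.posSemidef_lapMatrix ℝ G).1.rank_eq_card_non_zero_eigs
  have hker : Module.finrank ℝ (LinearMap.ker L.mulVecLin) = 1 := by
    have h1 : Fintype.card G.ConnectedComponent =
        Module.finrank ℝ (LinearMap.ker (Matrix.toLin' L)) :=
      G.card_connectedComponent_eq_finrank_ker_toLin'_lapMatrix
    have h2 : Fintype.card G.ConnectedComponent = 1 := by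
      have hs : Subsingleton G.ConnectedComponent :=
        hconn.preconnected.subsingleton_connectedComponent
      have := Fintype.card_le_one_iff_subsingleton.mpr hs
      have hpos : 0 < Fintype.card G.ConnectedComponent := by
        have hne : Nonempty G.ConnectedComponent :=
          ⟨G.connectedComponentMk ⟨0, hn⟩⟩
        exact Fintype.card_pos
      omega
    rw [Matrix.toLin'_apply'] at h1
    omega
  have hrn : L.rank + Module.finrank ℝ (LinearMap.ker L.mulVecLin) = n := by
    have := LinearMap.finrank_range_add_finrank_ker L.mulVecLin
    simpa [Matrix.rank] using this
  have hcompl : Fintype.card {i // ¬ ((SimpleGraph.posSemidef_lapMatrix ℝ G).1.eigenvalues i = 0)}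
      = Fintype.card (Fin n) - Fintype.card
        {i // (SimpleGraph.posSemidef_lapMatrix ℝ G).1.eigenvalues i = 0} :=
    Fintype.card_subtype_compl _
  have hle : Fintype.card {i // (SimpleGraph.posSemidef_lapMatrix ℝ G).1.eigenvalues i = 0}
      ≤ n := by
    have := Fintype.card_subtype_le
      (fun i : Fin n => (SimpleGraph.posSemidef_lapMatrix ℝ G).1.eigenvalues i = 0)
    simpa using this
  simp only [Fintype.card_fin] at hcompl
  rw [hcompl] at hrank
  omega

lemma my_mono (k C t₁ t₂ : ℝ) (hk : 0 ≤ k) (h0 : 0 < t₁) (h12 : t₁ ≤ t₂) (hC : t₂ < C)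
    (hcond : C - t₁ ≤ k * t₁) :
    1 / t₁ + k ^ 2 / (C - t₁) ≤ 1 / t₂ + k ^ 2 / (C - t₂) := by
  have h1 : 0 < C - t₂ := by linarith
  have h2 : 0 < C - t₁ := by linarith
  have h3 : 0 < t₂ := lt_of_lt_of_le h0 h12
  have hcond2 : C - t₂ ≤ k * t₂ := by nlinarith
  have key : (C - t₁) * (C - t₂) ≤ k ^ 2 * (t₁ * t₂) := by nlinarith
  rw [← sub_nonneg]
  have expand : 1 / t₂ + k ^ 2 / (C - t₂) - (1 / t₁ + k ^ 2 / (C - t₁)) =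
      (t₂ - t₁) * (k ^ 2 * (t₁ * t₂) - (C - t₁) * (C - t₂)) /
        (t₁ * t₂ * (C - t₁) * (C - t₂)) := by
    field_simp
    ring
  rw [expand]
  apply div_nonneg
  · apply mul_nonneg (by linarith)
    linarith
  · positivity

set_option maxHeartbeats 1000000 in
/-- For a connected graph `G` on `n ≥ 4` vertices with `m` edges, nonincreasing degree
sequence `d` (a rearrangement of the vertex degrees), nonincreasing Laplacian eigenvalues
`μ₁ ≥ … ≥ μ_n = 0` with `μ₁ ≥ 1 + d₁`, `μ₂ ≥ d₂`, and `(n−2) d₂ ≥ 2m − 1 − d₁`, the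
Kirchhoff index `Kf(G) = n ∑_{i=1}^{n−1} 1/μ_i` satisfies
`Kf(G) ≥ n (1/(1+d₁) + 1/d₂ + (n−3)²/(2m−1−d₁−d₂))`. -/
theorem stmt_12 {n : ℕ} (hn : 4 ≤ n) (G : SimpleGraph (Fin n)) [DecidableRel G.Adj]
    (hconn : G.Connected) (m : ℕ) (hm : m = G.edgeFinset.card)
    (d : Fin n → ℕ) (hda : Antitone d)
    (hdseq : ∃ σ : Equiv.Perm (Fin n), ∀ i, d i = G.degree (σ i))
    (μ : Fin n → ℝ) (hμa : Antitone μ)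
    (hchar : (SimpleGraph.lapMatrix ℝ G).charpoly =
      ∏ i, (Polynomial.X - Polynomial.C (μ i)))
    (hμn : μ ⟨n - 1, by omega⟩ = 0)
    (hμ1 : (1 : ℝ) + d ⟨0, by omega⟩ ≤ μ ⟨0, by omega⟩)
    (hμ2 : (d ⟨1, by omega⟩ : ℝ) ≤ μ ⟨1, by omega⟩)
    (hd2 : 2 * (m : ℝ) - 1 - d ⟨0, by omega⟩ ≤ ((n : ℝ) - 2) * d ⟨1, by omega⟩) :
    (n : ℝ) * (1 / ((1 : ℝ) + d ⟨0, by omega⟩) + 1 / (d ⟨1, by omega⟩ : ℝ) +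
        ((n : ℝ) - 3) ^ 2 / (2 * (m : ℝ) - 1 - d ⟨0, by omega⟩ - d ⟨1, by omega⟩)) ≤
      (n : ℝ) * ∑ i ∈ Finset.univ.filter (fun i : Fin n => (i : ℕ) < n - 1), 1 / μ i := by
  classical
  have hn1 : 1 ≤ n := by omega
  set i0 : Fin n := ⟨0, by omega⟩ with hi0def
  set i1 : Fin n := ⟨1, by omega⟩ with hi1def
  set ilast : Fin n := ⟨n - 1, by omega⟩ with hilastdef
  have hPSD := SimpleGraph.posSemidef_lapMatrix ℝ G
  have hmul := my_mu_eq_eigs (SimpleGraph.lapMatrix ℝ G) hPSD.1 μ hchar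
  -- every μ i is nonnegative
  have hμnonneg : ∀ i, 0 ≤ μ i := by
    intro i
    have hmem : μ i ∈ Multiset.map μ Finset.univ.val :=
      Multiset.mem_map_of_mem _ (Finset.mem_val.mpr (Finset.mem_univ i))
    rw [hmul] at hmem
    obtain ⟨j, _, hj⟩ := Multiset.mem_map.mp hmem
    rw [← hj]
    exact hPSD.eigenvalues_nonneg j
  -- exactly one of the μ i is zero
  have hzcard : (Finset.univ.filter fun i : Fin n => μ i = 0).card = 1 := by
    have h1 := my_nullity_one hn1 G hconn
    rw [Fintype.card_subtype] at h1
    have hgen : ∀ f : Fin n → ℝ, (Finset.univ.filter fun i : Fin n => f i = 0).card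
        = Multiset.count 0 (Multiset.map f Finset.univ.val) := by
      intro f
      rw [Multiset.count_map, Finset.card, Finset.filter_val]
      congr 1
      exact Multiset.filter_congr (fun x _ => eq_comm)
    rw [hgen μ, hmul, ← hgen _, h1]
  -- positivity of μ i for i < n - 1
  have hμpos : ∀ i : Fin n, (i : ℕ) < n - 1 → 0 < μ i := by
    intro i hi
    rcases (hμnonneg i).lt_or_eq with h | h
    · exact h
    · exfalso
      have hne : i ≠ ilast := by
        simp only [hilastdef, Fin.ne_iff_vne]
        omega
      have hsub : ({i, ilast} : Finset (Fin n)) ⊆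
          Finset.univ.filter (fun a => μ a = 0) := by
        intro x hx
        simp only [Finset.mem_insert, Finset.mem_singleton] at hx
        rcases hx with rfl | rfl
        · simp [← h]
        · simp [hμn]
      have hcard2 : ({i, ilast} : Finset (Fin n)).card = 2 := by
        rw [Finset.card_insert_of_notMem (by simpa using hne), Finset.card_singleton]
      have := Finset.card_le_card hsub
      omega
  -- trace identity : sum of μ equals 2m
  have htrace : ∑ i, μ i = 2 * (m : ℝ) := by
    have hne : Nonempty (Fin n) := ⟨i0⟩
    have hsplit : (SimpleGraph.lapMatrix ℝ G).charpoly.Splits := by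
      rw [hchar]
      exact Polynomial.Splits.prod (fun i _ => Polynomial.Splits.X_sub_C _)
    have h1 := Matrix.trace_eq_sum_roots_charpoly_of_splits hsplit
    have h2 : (SimpleGraph.lapMatrix ℝ G).charpoly.roots = Multiset.map μ Finset.univ.val := by
      rw [hchar]
      have : ∏ i, (Polynomial.X - Polynomial.C (μ i)) =
          ((Multiset.map μ Finset.univ.val).map fun a => Polynomial.X - Polynomial.C a).prod := by
        rw [Multiset.map_map]; rfl
      rw [this, Polynomial.roots_multiset_prod_X_sub_C]
    rw [h2] at h1
    have h3 : (Multiset.map μ Finset.univ.val).sum = ∑ i, μ i := rfl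
    have h4 : (SimpleGraph.lapMatrix ℝ G).trace = 2 * (m : ℝ) := by
      have hdiag : ∀ i, (SimpleGraph.lapMatrix ℝ G).diag i = (G.degree i : ℝ) := by
        intro i
        simp [Matrix.diag, SimpleGraph.lapMatrix, SimpleGraph.degMatrix]
      rw [Matrix.trace, Finset.sum_congr rfl (fun i _ => hdiag i), ← Nat.cast_sum,
        SimpleGraph.sum_degrees_eq_twice_card_edges, hm]
      push_cast
      ring
    rw [← h3, ← h1, h4]
  -- the index sets
  set T : Finset (Fin n) :=
    Finset.univ.filter (fun i : Fin n => 2 ≤ (i : ℕ) ∧ (i : ℕ) < n - 1) with hTdef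
  set F : Finset (Fin n) := Finset.univ.filter (fun i : Fin n => (i : ℕ) < n - 1) with hFdef
  have hi1T : i1 ∉ T := by simp [hTdef, hi1def]
  have hi0T : i0 ∉ insert i1 T := by
    simp [hTdef, hi0def, hi1def, Fin.ext_iff]
  have hF : F = insert i0 (insert i1 T) := by
    ext x
    simp only [hFdef, hTdef, Finset.mem_filter, Finset.mem_univ, true_and,
      Finset.mem_insert, Fin.ext_iff, hi0def, hi1def]
    omega
  have hFsum : ∀ f : Fin n → ℝ, ∑ i ∈ F, f i = f i0 + f i1 + ∑ i ∈ T, f i := by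
    intro f
    rw [hF, Finset.sum_insert hi0T, Finset.sum_insert hi1T]
    ring
  have hTcard : T.card = n - 3 := by
    rw [show T.card = (Finset.Ico 2 (n - 1)).card from ?_, Nat.card_Ico]
    · omega
    refine Finset.card_bij' (fun a _ => (a : ℕ)) (fun b hb => ⟨b, ?_⟩) ?_ ?_ ?_ ?_
    · simp only [Finset.mem_Ico] at hb; omega
    · intro a ha
      simp only [hTdef, Finset.mem_filter, Finset.mem_univ, true_and] at ha
      simp only [Finset.mem_Ico]
      omega
    · intro b hb
      simp only [Finset.mem_Ico] at hb
      simp only [hTdef, Finset.mem_filter, Finset.mem_univ, true_and]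
      omega
    · intro a _; rfl
    · intro b _; rfl
  have hTpos : ∀ i ∈ T, 0 < μ i := by
    intro i hi
    simp only [hTdef, Finset.mem_filter, Finset.mem_univ, true_and] at hi
    exact hμpos i hi.2
  have hTne : T.Nonempty := by
    refine ⟨⟨2, by omega⟩, ?_⟩
    simp only [hTdef, Finset.mem_filter, Finset.mem_univ, true_and]
    omega
  -- sum splitting
  have husum : ∑ i, μ i = ∑ i ∈ F, μ i := by
    have huniv : (Finset.univ : Finset (Fin n)) = insert ilast F := by
      ext x
      simp only [Finset.mem_univ, Finset.mem_insert, hFdef, Finset.mem_filter, true_and,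
        Fin.ext_iff, hilastdef, true_iff]
      have := x.isLt
      omega
    have hlF : ilast ∉ F := by
      simp [hFdef, hilastdef]
    rw [huniv, Finset.sum_insert hlF, hμn, zero_add]
  have hSTeq : μ i0 + μ i1 + ∑ i ∈ T, μ i = 2 * (m : ℝ) := by
    rw [← hFsum, ← husum, htrace]
  have hSTpos : 0 < ∑ i ∈ T, μ i := Finset.sum_pos hTpos hTne
  -- Cauchy-Schwarz
  have hCS : ((T.card : ℝ)) ^ 2 ≤ (∑ i ∈ T, μ i) * ∑ i ∈ T, 1 / μ i := by
    have := Finset.sum_sq_le_sum_mul_sum_of_sq_eq_mul T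
      (r := fun _ => (1 : ℝ)) (f := fun i => μ i) (g := fun i => 1 / μ i)
      (fun i hi => (hTpos i hi).le)
      (fun i hi => one_div_nonneg.mpr (hTpos i hi).le)
      (fun i hi => by rw [one_pow, mul_one_div, div_self (hTpos i hi).ne'])
    simpa using this
  have hTcardR : ((T.card : ℝ)) = (n : ℝ) - 3 := by
    rw [hTcard]
    have h3 : (3 : ℕ) ≤ n := by omega
    push_cast [Nat.cast_sub h3]
    ring
  have hCauchy : ((n : ℝ) - 3) ^ 2 / (∑ i ∈ T, μ i) ≤ ∑ i ∈ T, 1 / μ i := by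
    rw [div_le_iff₀ hSTpos, ← hTcardR]
    nlinarith [hCS]
  -- degrees are positive
  have hdegpos : ∀ v : Fin n, 0 < G.degree v := by
    intro v
    rw [SimpleGraph.degree_pos_iff_exists_adj]
    have : Nontrivial (Fin n) := Fin.nontrivial_iff_two_le.mpr (by omega)
    obtain ⟨w, hw⟩ := exists_ne v
    obtain ⟨p⟩ := hconn.preconnected v w
    cases p with
    | nil => exact absurd rfl hw
    | @cons _ u _ h _ => exact ⟨u, h⟩
  have hd1pos : (0 : ℝ) < (d i1 : ℝ) := by
    obtain ⟨σ, hσ⟩ := hdseq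
    have := hdegpos (σ i1)
    rw [← hσ i1] at this
    exact_mod_cast this
  have hdd : (d i1 : ℝ) ≤ (d i0 : ℝ) := by
    have := hda (show i0 ≤ i1 by simp [hi0def, hi1def, Fin.le_def])
    exact_mod_cast this
  have hmurange : μ i0 + μ i1 + ∑ i ∈ T, μ i = 2 * (m : ℝ) := hSTeq
  have hrw2 : ((n : ℝ) - 2) * (d i1 : ℝ) = ((n : ℝ) - 3) * (d i1 : ℝ) + (d i1 : ℝ) := by ring
  -- step 1 : move second coordinate from d i1 to μ i1
  have step1 := my_mono ((n : ℝ) - 3) (2 * (m : ℝ) - (1 + (d i0 : ℝ))) (d i1) (μ i1)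
    (by push_cast; linarith [show (4:ℝ) ≤ (n:ℝ) by exact_mod_cast hn])
    hd1pos hμ2
    (by linarith)
    (by linarith)
  -- step 2 : move first coordinate from 1 + d i0 to μ i0
  have step2 := my_mono ((n : ℝ) - 3) (2 * (m : ℝ) - μ i1) (1 + (d i0 : ℝ)) (μ i0)
    (by linarith [show (4:ℝ) ≤ (n:ℝ) by exact_mod_cast hn])
    (by positivity) hμ1
    (by linarith)
    (by nlinarith [show (4:ℝ) ≤ (n:ℝ) by exact_mod_cast hn])
  have e1 : 2 * (m : ℝ) - (1 + (d i0 : ℝ)) - (d i1 : ℝ)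
      = 2 * (m : ℝ) - 1 - (d i0 : ℝ) - (d i1 : ℝ) := by ring
  have e2 : 2 * (m : ℝ) - (1 + (d i0 : ℝ)) - μ i1
      = 2 * (m : ℝ) - μ i1 - (1 + (d i0 : ℝ)) := by ring
  have e3 : 2 * (m : ℝ) - μ i1 - μ i0 = ∑ i ∈ T, μ i := by linarith
  rw [e1, e2] at step1
  rw [e3] at step2
  have hfinal : 1 / (1 + (d i0 : ℝ)) + 1 / (d i1 : ℝ) +
      ((n : ℝ) - 3) ^ 2 / (2 * (m : ℝ) - 1 - (d i0 : ℝ) - (d i1 : ℝ)) ≤ ∑ i ∈ F, 1 / μ i := by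
    rw [hFsum (fun i => 1 / μ i)]
    linarith [step1, step2, hCauchy]
  exact mul_le_mul_of_nonneg_left hfinal (by positivity)
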